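/- For any integers n ≥ 1 and 0 ≤ l ≤ n−1, the function f_{nl} satisfies the radial Coulomb equation on (0, ∞): f_{nl}''(r) + (2/r) f_{nl}'(r) − (l(l+1)/r²) f_{nl}(r) + (2/r) f_{nl}(r) − (1/n²) f_{nl}(r) = 0 for all r > 0. -/

import Mathlib

open MeasureTheory Metric Set

noncomputable section

/-- The associated Laguerre polynomial `L_k^α(x) = ∑_{i=0}^{k} (-1)^i C(k+α, k-i) x^i / i!`. -/
def laguerre (k α : ℕ) (x : ℝ) : ℝ :=
  ∑ i ∈ Finset.range (k + 1),
    (-1 : ℝ) ^ i * (Nat.choose (k + α) (k - i)) * x ^ i / (Nat.factorial i)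

/-- The normalization constant `A_{nl} = 2^{l-1} (n-l-1)! / (n+l)!`. -/
def coulombA (n l : ℕ) : ℝ :=
  (2 : ℝ) ^ ((l : ℤ) - 1) * (Nat.factorial (n - l - 1)) / (Nat.factorial (n + l))

/-- The radial Coulomb eigenfunction `f_{nl}(r) = A_{nl} e^{-r/n} r^l L_{n-l-1}^{2l+1}(2r/n)`. -/
def fnl (n l : ℕ) (r : ℝ) : ℝ :=
  coulombA n l * Real.exp (-r / n) * r ^ l * laguerre (n - l - 1) (2 * l + 1) (2 * r / n)

/-- The Bessel function of the first kind of integer order `ν`. -/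
def besselJ (ν : ℕ) (x : ℝ) : ℝ :=
  ∑' j : ℕ, (-1 : ℝ) ^ j / ((Nat.factorial j) * (Nat.factorial (j + ν))) * (x / 2) ^ (2 * j + ν)

/-- The Bessel profile `J_{2l+1}(√(8r)) / √(8r)`. -/
def besselProfile (l : ℕ) (r : ℝ) : ℝ :=
  besselJ (2 * l + 1) (Real.sqrt (8 * r)) / Real.sqrt (8 * r)

def lagD (k α : ℕ) (x : ℝ) : ℝ :=
  ∑ i ∈ Finset.range k,
    (-1 : ℝ) ^ (i+1) * (Nat.choose (k + α) (k - i - 1)) * ((i:ℝ)+1) * x ^ i / (Nat.factorial (i+1))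

/-- Second derivative of `laguerre k α`. -/
def lagDD (k α : ℕ) (x : ℝ) : ℝ :=
  ∑ i ∈ Finset.range (k-1),
    (-1 : ℝ) ^ (i+2) * (Nat.choose (k + α) (k - i - 2)) * ((i:ℝ)+2) * ((i:ℝ)+1) * x ^ i / (Nat.factorial (i+2))

lemma hasDerivAt_laguerre (k α : ℕ) (x : ℝ) :
    HasDerivAt (laguerre k α) (lagD k α x) x := by
  have h : HasDerivAt (laguerre k α)
      (∑ i ∈ Finset.range (k+1),
        (-1 : ℝ) ^ i * (Nat.choose (k + α) (k - i)) * ((i:ℝ) * x ^ (i-1)) / (Nat.factorial i)) x := by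
    unfold laguerre
    apply HasDerivAt.fun_sum
    intro i _
    simpa [mul_div_assoc] using
      (((hasDerivAt_pow i x).const_mul
        ((-1 : ℝ) ^ i * (Nat.choose (k + α) (k - i)))).div_const (Nat.factorial i))
  convert h using 1
  rw [Finset.sum_range_succ']
  simp only [Nat.cast_zero, zero_mul, mul_zero, zero_div, add_zero]
  unfold lagD
  apply Finset.sum_congr rfl
  intro i _
  rw [show k - i - 1 = k - (1+i) from by omega]
  push_cast
  ring

lemma hasDerivAt_lagD (k α : ℕ) (x : ℝ) :
    HasDerivAt (lagD k α) (lagDD k α x) x := by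
  have h : HasDerivAt (lagD k α)
      (∑ i ∈ Finset.range k,
        (-1 : ℝ) ^ (i+1) * (Nat.choose (k + α) (k - i - 1)) * ((i:ℝ)+1) * ((i:ℝ) * x ^ (i-1)) / (Nat.factorial (i+1))) x := by
    unfold lagD
    apply HasDerivAt.fun_sum
    intro i _
    simpa [mul_div_assoc] using
      (((hasDerivAt_pow i x).const_mul
        ((-1 : ℝ) ^ (i+1) * (Nat.choose (k + α) (k - i - 1)) * ((i:ℝ)+1))).div_const (Nat.factorial (i+1)))
  convert h using 1
  cases k with
  | zero => simp [lagDD]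
  | succ m =>
    rw [Finset.sum_range_succ']
    simp only [Nat.cast_zero, zero_mul, mul_zero, zero_div, add_zero]
    unfold lagDD
    apply Finset.sum_congr rfl
    intro i _
    rw [show m + 1 - i - 2 = m + 1 - (i+1) - 1 from by omega]
    push_cast
    ring

lemma choose_id (k α i : ℕ) (h : i < k) :
    (k - i) * Nat.choose (k + α) (k - i) = (α + i + 1) * Nat.choose (k + α) (k - i - 1) := by
  obtain ⟨j, rfl⟩ : ∃ j, k = i + j + 1 := ⟨k - i - 1, by omega⟩
  have h1 : i + j + 1 - i = j + 1 := by omega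
  have h2 : i + j + 1 - i - 1 = j := by omega
  rw [h1, Nat.add_sub_cancel]
  have := Nat.choose_succ_right_eq (i + j + 1 + α) j
  have h3 : i + j + 1 + α - j = α + i + 1 := by omega
  rw [h3] at this
  rw [Nat.mul_comm (j+1), this, Nat.mul_comm]

lemma lag_ode (k α : ℕ) (x : ℝ) :
    x * lagDD k α x + ((α:ℝ) + 1 - x) * lagD k α x + (k:ℝ) * laguerre k α x = 0 := by
  have h1 : x * lagDD k α x = ∑ i ∈ Finset.range k,
      (-1 : ℝ) ^ (i+1) * (Nat.choose (k + α) (k - i - 1)) * ((i:ℝ)+1) * (i:ℝ) * x ^ i / (Nat.factorial (i+1)) := by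
    cases k with
    | zero => simp [lagDD]
    | succ m =>
      rw [Finset.sum_range_succ']
      unfold lagDD
      rw [Finset.mul_sum]
      simp only [Nat.cast_zero, mul_zero, zero_mul, zero_div, add_zero]
      apply Finset.sum_congr rfl
      intro i _
      rw [show m + 1 - i - 2 = m + 1 - (i+1) - 1 from by omega]
      push_cast
      ring
  have h2 : x * lagD k α x = ∑ i ∈ Finset.range (k+1),
      (i:ℝ) * ((-1 : ℝ) ^ i * (Nat.choose (k + α) (k - i)) * x ^ i / (Nat.factorial i)) := by
    rw [Finset.sum_range_succ']
    unfold lagD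
    rw [Finset.mul_sum]
    simp only [Nat.cast_zero, zero_mul, add_zero]
    apply Finset.sum_congr rfl
    intro i _
    rw [show k - (i+1) = k - i - 1 from by omega]
    push_cast
    ring
  have h3 : (k:ℝ) * laguerre k α x - x * lagD k α x = ∑ i ∈ Finset.range k,
      ((k:ℝ) - i) * ((-1 : ℝ) ^ i * (Nat.choose (k + α) (k - i)) * x ^ i / (Nat.factorial i)) := by
    rw [h2]
    unfold laguerre
    rw [Finset.mul_sum, ← Finset.sum_sub_distrib, Finset.sum_range_succ, sub_self, add_zero]
    apply Finset.sum_congr rfl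
    intro i _
    ring
  have key : ∀ i ∈ Finset.range k,
      (-1 : ℝ) ^ (i+1) * (Nat.choose (k + α) (k - i - 1)) * ((i:ℝ)+1) * (i:ℝ) * x ^ i / (Nat.factorial (i+1))
      + ((α:ℝ)+1) * ((-1 : ℝ) ^ (i+1) * (Nat.choose (k + α) (k - i - 1)) * ((i:ℝ)+1) * x ^ i / (Nat.factorial (i+1)))
      + ((k:ℝ) - i) * ((-1 : ℝ) ^ i * (Nat.choose (k + α) (k - i)) * x ^ i / (Nat.factorial i)) = 0 := by
    intro i hi
    rw [Finset.mem_range] at hi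
    have hc := choose_id k α i hi
    have hc' : ((k:ℝ) - i) * (Nat.choose (k + α) (k - i)) = ((α:ℝ) + i + 1) * (Nat.choose (k + α) (k - i - 1)) := by
      have : ((k - i : ℕ) : ℝ) * (Nat.choose (k + α) (k - i)) = (((α + i + 1 : ℕ)) : ℝ) * (Nat.choose (k + α) (k - i - 1)) := by
        exact_mod_cast congrArg (Nat.cast : ℕ → ℝ) hc
      push_cast [Nat.cast_sub hi.le] at this
      push_cast
      linarith [this]
    have hfac : (Nat.factorial (i+1) : ℝ) = ((i:ℝ)+1) * (Nat.factorial i) := by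
      rw [Nat.factorial_succ]; push_cast; ring
    have hfi : (Nat.factorial i : ℝ) ≠ 0 := by positivity
    have hfi1 : ((i:ℝ)+1) ≠ 0 := by positivity
    rw [hfac]
    linear_combination (norm := (field_simp; ring)) ((-1:ℝ)^i * x^i / (Nat.factorial i)) * hc'
  have expand : x * lagDD k α x + ((α:ℝ) + 1 - x) * lagD k α x + (k:ℝ) * laguerre k α x
      = x * lagDD k α x + ((α:ℝ)+1) * lagD k α x + ((k:ℝ) * laguerre k α x - x * lagD k α x) := by
    ring
  rw [expand, h1, h3]
  unfold lagD
  rw [Finset.mul_sum, ← Finset.sum_add_distrib, ← Finset.sum_add_distrib]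
  exact Finset.sum_eq_zero key

def coulombA' (n l : ℕ) : ℝ :=
  (2 : ℝ) ^ ((l : ℤ) - 1) * (Nat.factorial (n - l - 1)) / (Nat.factorial (n + l))

def fnl' (n l : ℕ) (r : ℝ) : ℝ :=
  coulombA' n l * Real.exp (-r / n) * r ^ l * laguerre (n - l - 1) (2 * l + 1) (2 * r / n)

def F1 (n l : ℕ) (x : ℝ) : ℝ :=
  coulombA' n l * Real.exp (-x / n) *
    ( -(1/(n:ℝ)) * x ^ l * laguerre (n-l-1) (2*l+1) (2*x/n)
      + (l:ℝ) * x ^ (l-1) * laguerre (n-l-1) (2*l+1) (2*x/n)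
      + (2/(n:ℝ)) * x ^ l * lagD (n-l-1) (2*l+1) (2*x/n) )

def F2 (n l : ℕ) (x : ℝ) : ℝ :=
  coulombA' n l * Real.exp (-x / n) *
    ( -(1/(n:ℝ)) * ( -(1/(n:ℝ)) * x ^ l * laguerre (n-l-1) (2*l+1) (2*x/n)
        + (l:ℝ) * x ^ (l-1) * laguerre (n-l-1) (2*l+1) (2*x/n)
        + (2/(n:ℝ)) * x ^ l * lagD (n-l-1) (2*l+1) (2*x/n) )
      + ( -(1/(n:ℝ)) * ( (l:ℝ) * x ^ (l-1) * laguerre (n-l-1) (2*l+1) (2*x/n)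
            + (2/(n:ℝ)) * x ^ l * lagD (n-l-1) (2*l+1) (2*x/n) )
        + (l:ℝ) * ( ((l-1:ℕ):ℝ) * x ^ (l-1-1) * laguerre (n-l-1) (2*l+1) (2*x/n)
            + (2/(n:ℝ)) * x ^ (l-1) * lagD (n-l-1) (2*l+1) (2*x/n) )
        + (2/(n:ℝ)) * ( (l:ℝ) * x ^ (l-1) * lagD (n-l-1) (2*l+1) (2*x/n)
            + (2/(n:ℝ)) * x ^ l * lagDD (n-l-1) (2*l+1) (2*x/n) ) ) )

lemma hasDerivAt_exp_div (n : ℕ) (x : ℝ) :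
    HasDerivAt (fun y : ℝ => Real.exp (-y / n)) (-(1/(n:ℝ)) * Real.exp (-x / n)) x := by
  have h1 : HasDerivAt (fun y : ℝ => -y / (n:ℝ)) (-1 / n) x := by
    simpa using ((hasDerivAt_id x).neg.div_const (n:ℝ))
  have := (Real.hasDerivAt_exp (-x / n)).comp x h1
  exact this.congr_deriv (by ring)

lemma hasDerivAt_lin (n : ℕ) (x : ℝ) :
    HasDerivAt (fun y : ℝ => 2 * y / (n:ℝ)) (2 / n) x := by
  simpa using (((hasDerivAt_id x).const_mul (2:ℝ)).div_const (n:ℝ))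

lemma hasDerivAt_lagC (k α n : ℕ) (x : ℝ) :
    HasDerivAt (fun y : ℝ => laguerre k α (2 * y / n)) (lagD k α (2*x/n) * (2/n)) x :=
  by exact (hasDerivAt_laguerre k α (2*x/n)).comp x (hasDerivAt_lin n x)

lemma hasDerivAt_lagDC (k α n : ℕ) (x : ℝ) :
    HasDerivAt (fun y : ℝ => lagD k α (2 * y / n)) (lagDD k α (2*x/n) * (2/n)) x :=
  by exact (hasDerivAt_lagD k α (2*x/n)).comp x (hasDerivAt_lin n x)

lemma hasDerivAt_fnl' (n l : ℕ) (x : ℝ) :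
    HasDerivAt (fnl' n l) (F1 n l x) x := by
  have h := (((hasDerivAt_exp_div n x).const_mul (coulombA' n l)).mul
      (hasDerivAt_pow l x)).mul (hasDerivAt_lagC (n-l-1) (2*l+1) n x)
  exact h.congr_deriv (by unfold F1; simp only [Pi.mul_apply, Pi.add_apply]; ring)

lemma hasDerivAt_F1 (n l : ℕ) (x : ℝ) :
    HasDerivAt (F1 n l) (F2 n l x) x := by
  have hb1 : HasDerivAt (fun y : ℝ => -(1/(n:ℝ)) * y ^ l * laguerre (n-l-1) (2*l+1) (2*y/n))
      ( -(1/(n:ℝ)) * ((l:ℝ) * x ^ (l-1)) * laguerre (n-l-1) (2*l+1) (2*x/n)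
        + (-(1/(n:ℝ)) * x ^ l) * (lagD (n-l-1) (2*l+1) (2*x/n) * (2/n)) ) x := by
    exact ((hasDerivAt_pow l x).const_mul (-(1/(n:ℝ)))).mul (hasDerivAt_lagC (n-l-1) (2*l+1) n x)
  have hb2 : HasDerivAt (fun y : ℝ => (l:ℝ) * y ^ (l-1) * laguerre (n-l-1) (2*l+1) (2*y/n))
      ( (l:ℝ) * (((l-1:ℕ):ℝ) * x ^ (l-1-1)) * laguerre (n-l-1) (2*l+1) (2*x/n)
        + ((l:ℝ) * x ^ (l-1)) * (lagD (n-l-1) (2*l+1) (2*x/n) * (2/n)) ) x := by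
    exact ((hasDerivAt_pow (l-1) x).const_mul ((l:ℝ))).mul (hasDerivAt_lagC (n-l-1) (2*l+1) n x)
  have hb3 : HasDerivAt (fun y : ℝ => (2/(n:ℝ)) * y ^ l * lagD (n-l-1) (2*l+1) (2*y/n))
      ( (2/(n:ℝ)) * ((l:ℝ) * x ^ (l-1)) * lagD (n-l-1) (2*l+1) (2*x/n)
        + ((2/(n:ℝ)) * x ^ l) * (lagDD (n-l-1) (2*l+1) (2*x/n) * (2/n)) ) x := by
    exact ((hasDerivAt_pow l x).const_mul ((2/(n:ℝ)))).mul (hasDerivAt_lagDC (n-l-1) (2*l+1) n x)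
  have h := ((hasDerivAt_exp_div n x).const_mul (coulombA' n l)).mul ((hb1.add hb2).add hb3)
  exact h.congr_deriv (by unfold F2; simp only [Pi.mul_apply, Pi.add_apply]; ring)

set_option maxHeartbeats 1000000 in
theorem fnl'_radial_equation (n l : ℕ) (hn : 1 ≤ n) (hl : l ≤ n - 1) (r : ℝ) (hr : 0 < r) :
    deriv (deriv (fnl' n l)) r + (2 / r) * deriv (fnl' n l) r
        - ((l : ℝ) * ((l : ℝ) + 1) / r ^ 2) * fnl' n l r
        + (2 / r) * fnl' n l r - (1 / (n : ℝ) ^ 2) * fnl' n l r = 0 := by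
  have hln : l + 1 ≤ n := by omega
  have hn0 : (n:ℝ) ≠ 0 := by positivity
  have hr0 : r ≠ 0 := ne_of_gt hr
  have hd1 : deriv (fnl' n l) = F1 n l := funext fun x => (hasDerivAt_fnl' n l x).deriv
  rw [hd1, (hasDerivAt_F1 n l r).deriv]
  have key := lag_ode (n - l - 1) (2*l+1) (2*r/n)
  have hk : ((n - l - 1 : ℕ):ℝ) = (n:ℝ) - l - 1 := by
    rw [Nat.sub_sub]
    push_cast [Nat.cast_sub hln]
    ring
  rw [hk] at key
  push_cast at key
  unfold F2 F1 fnl'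
  set c := coulombA' n l with hc
  set E := Real.exp (-r/n) with hE
  set L := laguerre (n-l-1) (2*l+1) (2*r/n) with hL
  set D := lagD (n-l-1) (2*l+1) (2*r/n) with hD
  set DD := lagDD (n-l-1) (2*l+1) (2*r/n) with hDD
  clear_value c E L D DD
  clear hd1 hc hE hL hD hDD
  rcases l with _ | _ | m
  · simp only [Nat.cast_zero, pow_zero, Nat.zero_sub, Nat.sub_zero] at *
    linear_combination (norm := (field_simp; ring)) (2 * c * E / ((n:ℝ) * r)) * key
  · simp only [Nat.cast_one, pow_one, Nat.sub_self, pow_zero, Nat.cast_zero] at *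
    linear_combination (norm := (field_simp; ring)) (2 * c * E / (n:ℝ)) * key
  · simp only [Nat.add_sub_cancel]
    push_cast
    push_cast at key
    linear_combination (norm := (field_simp; ring)) (2 * c * E * r^(m+1) / (n:ℝ)) * key

/-- For integers `n ≥ 1` and `0 ≤ l ≤ n-1`, the function `f_{nl}` satisfies the radial
Coulomb equation `f'' + (2/r) f' - (l(l+1)/r²) f + (2/r) f - (1/n²) f = 0` on `(0, ∞)`. -/
theorem fnl_radial_equation (n l : ℕ) (hn : 1 ≤ n) (hl : l ≤ n - 1) (r : ℝ) (hr : 0 < r) :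
    deriv (deriv (fnl n l)) r + (2 / r) * deriv (fnl n l) r
        - ((l : ℝ) * ((l : ℝ) + 1) / r ^ 2) * fnl n l r
        + (2 / r) * fnl n l r - (1 / (n : ℝ) ^ 2) * fnl n l r = 0 := by
  have h : fnl n l = fnl' n l := rfl
  rw [h]
  exact fnl'_radial_equation n l hn hl r hr
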